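/- Let Ŝ be a doubly uniform sampling of [n] with Prob(Ŝ = ∅) ≠ 1. Then its probability matrix is P = (E[|Ŝ|]/n)((1−β)I + βE) with β = (E[|Ŝ|²]/E[|Ŝ|] − 1)/max(n−1,1). -/

import Mathlib

open Finset Matrix BigOperators

/-- Probability matrix of a sampling given by its probability mass function `p` on
subsets of `[n]`: `P i j = Prob({i,j} ⊆ Ŝ)`. -/
noncomputable def probMatrixPMF {n : ℕ} (p : Finset (Fin n) → ℝ) : Matrix (Fin n) (Fin n) ℝ :=
  fun i j => ∑ S : Finset (Fin n), if i ∈ S ∧ j ∈ S then p S else 0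

/-- auxiliary: pair probability -/
noncomputable def pairProb {n : ℕ} (p : Finset (Fin n) → ℝ) (i j : Fin n) : ℝ :=
  ∑ S : Finset (Fin n), if i ∈ S ∧ j ∈ S then p S else 0

lemma pairProb_perm {n : ℕ} (p : Finset (Fin n) → ℝ)
    (hdu : ∀ S₁ S₂ : Finset (Fin n), S₁.card = S₂.card → p S₁ = p S₂)
    (σ : Equiv.Perm (Fin n)) (i j : Fin n) :
    pairProb p (σ i) (σ j) = pairProb p i j := by
  unfold pairProb
  refine (Fintype.sum_equiv (Equiv.finsetCongr σ)
    (fun S => if i ∈ S ∧ j ∈ S then p S else 0)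
    (fun S => if σ i ∈ S ∧ σ j ∈ S then p S else 0) ?_).symm
  intro S
  simp only [Equiv.finsetCongr_apply, Finset.mem_map_equiv, Equiv.symm_apply_apply]
  split_ifs with h
  · exact hdu _ _ (Finset.card_map _).symm
  · rfl

lemma pairProb_pair_const {n : ℕ} (p : Finset (Fin n) → ℝ)
    (hdu : ∀ S₁ S₂ : Finset (Fin n), S₁.card = S₂.card → p S₁ = p S₂)
    {i j k l : Fin n} (hij : i ≠ j) (hkl : k ≠ l) :
    pairProb p k l = pairProb p i j := by
  set σ : Equiv.Perm (Fin n) :=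
    (Equiv.swap i k).trans (Equiv.swap ((Equiv.swap i k) j) l) with hσ
  have hji : (Equiv.swap i k) j ≠ k := by
    intro h
    apply hij
    have := (Equiv.swap i k).injective (a₁ := j) (a₂ := i)
    simp only [Equiv.swap_apply_left] at this
    exact (this h).symm ▸ rfl
  have hσi : σ i = k := by
    simp only [hσ, Equiv.trans_apply, Equiv.swap_apply_left]
    exact Equiv.swap_apply_of_ne_of_ne (fun h => hji h.symm) hkl
  have hσj : σ j = l := by
    simp only [hσ, Equiv.trans_apply, Equiv.swap_apply_left]
  calc pairProb p k l = pairProb p (σ i) (σ j) := by rw [hσi, hσj]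
    _ = pairProb p i j := pairProb_perm p hdu σ i j

lemma pairProb_diag_const {n : ℕ} (p : Finset (Fin n) → ℝ)
    (hdu : ∀ S₁ S₂ : Finset (Fin n), S₁.card = S₂.card → p S₁ = p S₂)
    (i k : Fin n) : pairProb p k k = pairProb p i i := by
  have := pairProb_perm p hdu (Equiv.swap i k) i i
  simpa using this

lemma sum_pairProb_diag {n : ℕ} (p : Finset (Fin n) → ℝ) :
    ∑ i : Fin n, pairProb p i i = ∑ S : Finset (Fin n), p S * S.card := by
  unfold pairProb
  rw [Finset.sum_comm]
  refine Finset.sum_congr rfl fun S _ => ?_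
  simp only [and_self]
  rw [Finset.sum_ite_mem, Finset.univ_inter, Finset.sum_const, nsmul_eq_mul, mul_comm]

lemma sum_pairProb_total {n : ℕ} (p : Finset (Fin n) → ℝ) :
    ∑ i : Fin n, ∑ j : Fin n, pairProb p i j
      = ∑ S : Finset (Fin n), p S * (S.card : ℝ) ^ 2 := by
  unfold pairProb
  have step1 : ∀ i : Fin n, (∑ j : Fin n, ∑ S : Finset (Fin n),
      if i ∈ S ∧ j ∈ S then p S else 0)
      = ∑ S : Finset (Fin n), ∑ j : Fin n, if i ∈ S ∧ j ∈ S then p S else 0 :=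
    fun i => Finset.sum_comm
  calc ∑ i : Fin n, ∑ j : Fin n, ∑ S : Finset (Fin n), (if i ∈ S ∧ j ∈ S then p S else 0)
      = ∑ i : Fin n, ∑ S : Finset (Fin n), ∑ j : Fin n,
          (if i ∈ S ∧ j ∈ S then p S else 0) := Finset.sum_congr rfl fun i _ => step1 i
    _ = ∑ S : Finset (Fin n), ∑ i : Fin n, ∑ j : Fin n,
          (if i ∈ S ∧ j ∈ S then p S else 0) := Finset.sum_comm
    _ = ∑ S : Finset (Fin n), p S * (S.card : ℝ) ^ 2 := by
        refine Finset.sum_congr rfl fun S _ => ?_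
        have hF : ∀ i j : Fin n, (if i ∈ S ∧ j ∈ S then p S else 0)
            = (if i ∈ S then (1:ℝ) else 0) * (if j ∈ S then p S else 0) := by
          intro i j; split_ifs <;> simp_all
        simp only [hF, ← Finset.sum_mul, ← Finset.mul_sum]
        rw [Finset.sum_ite_mem, Finset.sum_ite_mem, Finset.univ_inter,
          Finset.sum_const, Finset.sum_const, nsmul_eq_mul, nsmul_eq_mul]
        ring

theorem probMatrix_doublyUniform
    {n : ℕ} (p : Finset (Fin n) → ℝ)
    (hp0 : ∀ S, 0 ≤ p S) (hp1 : ∑ S : Finset (Fin n), p S = 1)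
    (hdu : ∀ S₁ S₂ : Finset (Fin n), S₁.card = S₂.card → p S₁ = p S₂)
    (hnil : p ∅ ≠ 1) :
    probMatrixPMF p =
      ((∑ S : Finset (Fin n), p S * S.card) / n) •
        ((1 - ((∑ S : Finset (Fin n), p S * (S.card : ℝ) ^ 2) /
              (∑ S : Finset (Fin n), p S * S.card) - 1) / (max (n - 1) 1 : ℕ)) •
            (1 : Matrix (Fin n) (Fin n) ℝ) +
          (((∑ S : Finset (Fin n), p S * (S.card : ℝ) ^ 2) /
              (∑ S : Finset (Fin n), p S * S.card) - 1) / (max (n - 1) 1 : ℕ)) •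
            (Matrix.of fun _ _ => (1:ℝ) : Matrix (Fin n) (Fin n) ℝ)) := by
  set E1 := ∑ S : Finset (Fin n), p S * (S.card : ℝ) with hE1def
  set E2 := ∑ S : Finset (Fin n), p S * (S.card : ℝ) ^ 2 with hE2def
  have hE1ne : E1 ≠ 0 := by
    intro h
    have hz : ∀ S ∈ (Finset.univ : Finset (Finset (Fin n))), p S * (S.card : ℝ) = 0 :=
      (Finset.sum_eq_zero_iff_of_nonneg
        (fun S _ => mul_nonneg (hp0 S) (Nat.cast_nonneg _))).mp h
    apply hnil
    rw [← hp1]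
    refine (Finset.sum_eq_single ∅ (fun S _ hS => ?_) (fun h => absurd (Finset.mem_univ _) h)).symm
    have := hz S (Finset.mem_univ S)
    rcases mul_eq_zero.mp this with h' | h'
    · exact h'
    · exact absurd (Finset.card_eq_zero.mp (by exact_mod_cast h')) hS
  ext i j
  have hn0 : (n : ℝ) ≠ 0 := by
    have := i.pos
    positivity
  show pairProb p i j = _
  simp only [Matrix.smul_apply, Matrix.add_apply, Matrix.of_apply, smul_eq_mul]
  by_cases hij : i = j
  · subst hij
    rw [Matrix.one_apply_eq]
    have hconst : ∀ k : Fin n, pairProb p k k = pairProb p i i :=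
      fun k => pairProb_diag_const p hdu i k
    have hsum : (n : ℝ) * pairProb p i i = E1 := by
      rw [hE1def, ← sum_pairProb_diag p, Finset.sum_congr rfl fun k _ => hconst k,
        Finset.sum_const, Finset.card_univ, Fintype.card_fin, nsmul_eq_mul]
    have : pairProb p i i = E1 / n := by
      field_simp
      linarith [hsum]
    rw [this]
    ring
  · rw [Matrix.one_apply_ne hij]
    have h2 : 1 < n := by
      rw [← Fintype.card_fin n]
      exact Fintype.one_lt_card_iff_nontrivial.mpr ⟨⟨i, j, hij⟩⟩
    have hmax : ((max (n - 1) 1 : ℕ) : ℝ) = (n : ℝ) - 1 := by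
      rw [Nat.max_eq_left (by omega), Nat.cast_sub (by omega), Nat.cast_one]
    have hdiag : ∑ k : Fin n, pairProb p k k = E1 := sum_pairProb_diag p
    have htot : ∑ x ∈ Finset.univ ×ˢ (Finset.univ : Finset (Fin n)),
        pairProb p x.1 x.2 = E2 := by
      rw [Finset.sum_product, hE2def]
      exact sum_pairProb_total p
    have hsplit : E2 = E1 + ∑ x ∈ (Finset.univ : Finset (Fin n)).offDiag,
        pairProb p x.1 x.2 := by
      rw [← htot, ← Finset.diag_union_offDiag,
        Finset.sum_union (Finset.disjoint_diag_offDiag _), Finset.sum_diag]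
      rw [hdiag]
    have hoffconst : ∀ x ∈ (Finset.univ : Finset (Fin n)).offDiag,
        pairProb p x.1 x.2 = pairProb p i j := by
      rintro ⟨k, l⟩ hx
      rw [Finset.mem_offDiag] at hx
      exact pairProb_pair_const p hdu hij hx.2.2
    have hcard : ((Finset.univ : Finset (Fin n)).offDiag.card : ℝ)
        = (n : ℝ) * n - n := by
      rw [Finset.offDiag_card, Finset.card_univ, Fintype.card_fin]
      rw [Nat.cast_sub (Nat.le_mul_of_pos_left n (by omega))]
      push_cast
      ring
    have hkey : ((n : ℝ) * n - n) * pairProb p i j = E2 - E1 := by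
      rw [hsplit, Finset.sum_congr rfl hoffconst, Finset.sum_const, nsmul_eq_mul, hcard]
      ring
    have h1R : (n : ℝ) - 1 ≠ 0 := by
      have : (1 : ℝ) < n := by exact_mod_cast h2
      linarith
    rw [hmax]
    rw [mul_zero, zero_add, mul_one]
    have hkey' : ((n : ℝ) * ((n : ℝ) - 1)) * pairProb p i j = E2 - E1 := by
      linear_combination hkey
    have hg : pairProb p i j = (E2 - E1) / ((n : ℝ) * ((n : ℝ) - 1)) := by
      rw [eq_div_iff (mul_ne_zero hn0 h1R)]
      linarith [hkey']
    rw [hg]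
    field_simp
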